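/- Let f_1, f_2 : ℝ³ → ℝ be given by f_1(x,y,z) = (x² + y² + z²)² and f_2(x,y,z) = (x² + y²)² + z⁴. Then there do not exist a real constant c and an invertible real 3×3 matrix R such that f_2(v) = c·f_1(vR) for all v ∈ ℝ³. -/
import Mathlib


lemma cone_scalar_contradiction (c a d e : ℝ) (ha : c * a^2 = 1) (hd : c * d^2 = 1)
    (h3 : c * (a + d + 2*e)^2 = 2) (h4 : c * (a + d - 2*e)^2 = 2)
    (h5 : c * (a + 4*d + 4*e)^2 = 17) : False := by
  have hce : c * e * (a + d) = 0 := by linear_combination (h3 - h4) / 8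
  have hce2 : c * e^2 + c * (a*d) / 2 = 0 := by linear_combination h3/4 - ha/4 - hd/4 - hce
  have hcde : c * (d*e) = 0 := by linear_combination h5/24 - ha/24 - 2*hd/3 - 2/3*hce2 - hce/3
  have hce20 : c * e^2 = 0 := by nlinarith [sq_nonneg (c*d*e), hcde, hd]
  have hcad : c * (a*d) = 0 := by linarith
  nlinarith [ha, hd, hcad]

/-- The polynomials `f₁(x,y,z) = (x²+y²+z²)²` and `f₂(x,y,z) = (x²+y²)² + z⁴`
are not related by `f₂(v) = c·f₁(vR)` for any constant `c` and any
invertible `3 × 3` matrix `R`. -/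
theorem sphere_not_equivalent_to_cone :
    ¬ ∃ (c : ℝ) (R : Matrix (Fin 3) (Fin 3) ℝ), IsUnit R ∧
      ∀ v : Fin 3 → ℝ,
        ((v 0) ^ 2 + (v 1) ^ 2) ^ 2 + (v 2) ^ 4 =
          c * ((∑ i, v i * R i 0) ^ 2 + (∑ i, v i * R i 1) ^ 2 +
               (∑ i, v i * R i 2) ^ 2) ^ 2 := by
  rintro ⟨c, R, -, h⟩
  have h1 := h ![1, 0, 0]
  have h2 := h ![0, 0, 1]
  have h3 := h ![1, 0, 1]
  have h4 := h ![1, 0, -1]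
  have h5 := h ![1, 0, 2]
  simp only [Fin.sum_univ_three, Matrix.cons_val_zero, Matrix.cons_val_one, Matrix.head_cons,
    Matrix.cons_val_two, Matrix.tail_cons] at h1 h2 h3 h4 h5
  set a := (R 0 0)^2 + (R 0 1)^2 + (R 0 2)^2 with ha_def
  set d := (R 2 0)^2 + (R 2 1)^2 + (R 2 2)^2 with hd_def
  set e := R 0 0 * R 2 0 + R 0 1 * R 2 1 + R 0 2 * R 2 2 with he_def
  apply cone_scalar_contradiction c a d e
  · linear_combination -h1
  · linear_combination -h2
  · linear_combination -h3
  · linear_combination -h4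
  · linear_combination -h5
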